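/- Let I, J, K be a partition of {1,…,m} and let Y_0 ⊆ Y be nonempty. The following are equivalent: (i) there exist functions f(y, x_I, x_K), g(y, x_J, x_K) and h(x) such that P(y|x) = f(y, x_I, x_K) · g(y, x_J, x_K) · h(x) for all x ∈ X and all y ∈ Y_0; (ii) ⟨u_H(x), v(y) − v(y')⟩ = 0 for all x ∈ X, all y, y' ∈ Y_0, and all H ⊆ {1,…,m} with H ∩ I ≠ ∅ and H ∩ J ≠ ∅. -/

import Mathlib

open Finset
open scoped RealInnerProductSpace

/-- Averaging operator π_J. -/
noncomputable def piAvg {ι : Type*} [Fintype ι] [DecidableEq ι] {Z : ι → Type*}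
    [∀ i, Fintype (Z i)] [∀ i, DecidableEq (Z i)] {V : Type*} [AddCommGroup V] [Module ℝ V]
    (J : Finset ι) (w : (∀ i, Z i) → V) : (∀ i, Z i) → V :=
  fun z => (∏ i ∈ Jᶜ, (Fintype.card (Z i) : ℝ))⁻¹ •
    ∑ z' ∈ Finset.univ.filter (fun z' : ∀ i, Z i => ∀ i ∈ J, z' i = z i), w z'

/-- Interaction projection Q_I. -/
noncomputable def Qop {ι : Type*} [Fintype ι] [DecidableEq ι] {Z : ι → Type*}
    [∀ i, Fintype (Z i)] [∀ i, DecidableEq (Z i)] {V : Type*} [AddCommGroup V] [Module ℝ V]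
    (I : Finset ι) (w : (∀ i, Z i) → V) : (∀ i, Z i) → V :=
  ∑ J ∈ I.powerset, ((-1 : ℝ) ^ (I \ J).card) • piAvg J w

section Aux
variable {ι : Type*} [Fintype ι] [DecidableEq ι] {Z : ι → Type*}
  [∀ i, Fintype (Z i)] [∀ i, DecidableEq (Z i)] [∀ i, Nonempty (Z i)]
  {V : Type*} [AddCommGroup V] [Module ℝ V]

lemma piAvg_congr (J : Finset ι) (w : (∀ i, Z i) → V) {x x' : ∀ i, Z i}
    (hx : ∀ i ∈ J, x i = x' i) : piAvg J w x = piAvg J w x' := by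
  unfold piAvg
  congr 1
  refine Finset.sum_congr ?_ fun _ _ => rfl
  apply Finset.filter_congr
  intro z _
  constructor <;> intro h i hi
  · rw [h i hi]; exact hx i hi
  · rw [h i hi]; exact (hx i hi).symm

lemma Qop_apply (H : Finset ι) (w : (∀ i, Z i) → V) (x : ∀ i, Z i) :
    Qop H w x = ∑ J ∈ H.powerset, ((-1 : ℝ) ^ (H \ J).card) • piAvg J w x := by
  simp [Qop]

lemma Qop_congr (H : Finset ι) (w : (∀ i, Z i) → V) {x x' : ∀ i, Z i}
    (hx : ∀ i ∈ H, x i = x' i) : Qop H w x = Qop H w x' := by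
  rw [Qop_apply, Qop_apply]
  refine Finset.sum_congr rfl fun J hJ => ?_
  rw [piAvg_congr J w (fun i hi => hx i (Finset.mem_powerset.mp hJ hi))]

lemma piAvg_add_apply (J : Finset ι) (w₁ w₂ : (∀ i, Z i) → V) (x : ∀ i, Z i) :
    piAvg J (fun z => w₁ z + w₂ z) x = piAvg J w₁ x + piAvg J w₂ x := by
  simp [piAvg, Finset.sum_add_distrib, smul_add]

lemma Qop_add_apply (H : Finset ι) (w₁ w₂ : (∀ i, Z i) → V) (x : ∀ i, Z i) :
    Qop H (fun z => w₁ z + w₂ z) x = Qop H w₁ x + Qop H w₂ x := by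
  simp [Qop_apply, piAvg_add_apply, smul_add, Finset.sum_add_distrib]

lemma piAvg_insert {S : Finset ι} {w : (∀ i, Z i) → V}
    (hw : ∀ x x' : ∀ i, Z i, (∀ j ∈ S, x j = x' j) → w x = w x')
    {i : ι} (hiS : i ∉ S) {J : Finset ι} (hiJ : i ∉ J) (x : ∀ i, Z i) :
    piAvg (insert i J) w x = piAvg J w x := by
  have key : ∀ a : Z i,
      ∑ z ∈ (Finset.univ.filter (fun z : ∀ i, Z i => ∀ j ∈ J, z j = x j)).filter
        (fun z => z i = a), w z
      = ∑ z ∈ Finset.univ.filter (fun z : ∀ i, Z i => ∀ j ∈ insert i J, z j = x j), w z := by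
    intro a
    refine Finset.sum_nbij' (fun z => Function.update z i (x i))
      (fun z => Function.update z i a) ?_ ?_ ?_ ?_ ?_
    · intro z hz
      simp only [Finset.mem_filter, Finset.mem_univ, true_and] at hz ⊢
      intro j hj
      rcases Finset.mem_insert.mp hj with h | hjJ
      · subst h; simp
      · have hji : j ≠ i := by intro h; subst h; exact hiJ hjJ
        rw [Function.update_of_ne hji]
        exact hz.1 j hjJ
    · intro z hz
      simp only [Finset.mem_filter, Finset.mem_univ, true_and] at hz ⊢
      refine ⟨fun j hj => ?_, by simp⟩
      have hji : j ≠ i := by intro h; subst h; exact hiJ hj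
      rw [Function.update_of_ne hji]
      exact hz j (Finset.mem_insert_of_mem hj)
    · intro z hz
      simp only [Finset.mem_filter, Finset.mem_univ, true_and] at hz
      rw [Function.update_idem, ← hz.2, Function.update_eq_self]
    · intro z hz
      simp only [Finset.mem_filter, Finset.mem_univ, true_and] at hz
      rw [Function.update_idem, ← hz i (Finset.mem_insert_self i J), Function.update_eq_self]
    · intro z hz
      refine hw _ _ fun j hj => ?_
      have hji : j ≠ i := by intro h; subst h; exact hiS hj
      rw [Function.update_of_ne hji]
  have hsum : ∑ z ∈ Finset.univ.filter (fun z : ∀ i, Z i => ∀ j ∈ J, z j = x j), w z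
      = (Fintype.card (Z i)) •
        ∑ z ∈ Finset.univ.filter (fun z : ∀ i, Z i => ∀ j ∈ insert i J, z j = x j), w z := by
    rw [← Finset.sum_fiberwise (Finset.univ.filter (fun z : ∀ i, Z i => ∀ j ∈ J, z j = x j))
      (fun z => z i) w]
    rw [Finset.sum_congr rfl (fun a _ => key a), Finset.sum_const, Finset.card_univ]
  have hiJc : i ∈ Jᶜ := Finset.mem_compl.mpr hiJ
  have hprod : ∏ k ∈ Jᶜ, (Fintype.card (Z k) : ℝ)
      = (Fintype.card (Z i) : ℝ) * ∏ k ∈ (insert i J)ᶜ, (Fintype.card (Z k) : ℝ) := by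
    rw [← Finset.mul_prod_erase _ _ hiJc]
    congr 1
    rw [Finset.compl_insert]
  have hc : (Fintype.card (Z i) : ℝ) ≠ 0 := by
    exact_mod_cast Fintype.card_ne_zero
  unfold piAvg
  rw [hsum, hprod, ← Nat.cast_smul_eq_nsmul ℝ, smul_smul]
  congr 1
  field_simp

lemma Qop_eq_zero {S : Finset ι} {w : (∀ i, Z i) → V}
    (hw : ∀ x x' : ∀ i, Z i, (∀ j ∈ S, x j = x' j) → w x = w x')
    {H : Finset ι} {i : ι} (hiH : i ∈ H) (hiS : i ∉ S) (x : ∀ i, Z i) :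
    Qop H w x = 0 := by
  rw [Qop_apply]
  have hH : H = insert i (H.erase i) := (Finset.insert_erase hiH).symm
  have hie : i ∉ H.erase i := Finset.notMem_erase i H
  rw [hH, Finset.sum_powerset_insert hie]
  rw [← Finset.sum_add_distrib]
  refine Finset.sum_eq_zero fun t ht => ?_
  have hit : i ∉ t := fun h => hie (Finset.mem_powerset.mp ht h)
  have hpi : piAvg (insert i t) w x = piAvg t w x := piAvg_insert hw hiS hit x
  have hcard : (insert i (H.erase i) \ t).card = (insert i (H.erase i) \ insert i t).card + 1 := by
    have h1 : insert i (H.erase i) \ t = insert i (insert i (H.erase i) \ insert i t) := by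
      ext j
      by_cases hji : j = i
      · subst hji
        simp [Finset.mem_sdiff, Finset.mem_insert, hit]
      · simp [Finset.mem_sdiff, Finset.mem_insert, hji]
    rw [h1, Finset.card_insert_of_notMem (by simp)]
  rw [hpi, hcard, ← add_smul, pow_succ]
  ring_nf
  simp

lemma piAvg_univ (w : (∀ i, Z i) → V) (x : ∀ i, Z i) :
    piAvg (Finset.univ : Finset ι) w x = w x := by
  unfold piAvg
  have h1 : Finset.univ.filter (fun z : ∀ i, Z i => ∀ i ∈ (Finset.univ : Finset ι), z i = x i)
      = {x} := by
    ext z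
    simp [funext_iff]
  rw [h1]
  simp

lemma sum_Qop (w : (∀ i, Z i) → V) (x : ∀ i, Z i) :
    ∑ H ∈ (Finset.univ : Finset ι).powerset, Qop H w x = w x := by
  simp only [Qop_apply]
  rw [Finset.sum_comm' (t' := (Finset.univ : Finset ι).powerset)
    (s' := fun J => (Finset.univ : Finset ι).powerset.filter (fun H => J ⊆ H))
    (by intro H J; simp [Finset.mem_powerset])]
  have main : ∀ J ∈ (Finset.univ : Finset ι).powerset,
      ∑ H ∈ (Finset.univ : Finset ι).powerset.filter (fun H => J ⊆ H),
        ((-1 : ℝ) ^ (H \ J).card) • piAvg J w x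
      = (if J = Finset.univ then (1:ℝ) else 0) • piAvg J w x := by
    intro J _
    rw [← Finset.sum_smul]
    congr 1
    rw [Finset.sum_nbij' (i := fun H => H \ J) (j := fun T => J ∪ T)
      (t := Jᶜ.powerset) (g := fun T => (-1 : ℝ) ^ T.card)
      (fun H hH => Finset.mem_powerset.mpr
        (fun j hj => Finset.mem_compl.mpr (Finset.mem_sdiff.mp hj).2))
      (fun T hT => by
        simp only [Finset.mem_filter, Finset.mem_powerset] at *
        exact ⟨Finset.subset_univ _, Finset.subset_union_left⟩)
      (fun H hH => by
        simp only [Finset.mem_filter, Finset.mem_powerset] at hH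
        exact Finset.union_sdiff_of_subset hH.2)
      (fun T hT => by
        simp only [Finset.mem_powerset] at hT
        exact Finset.union_sdiff_cancel_left
          (Finset.disjoint_left.mpr (fun a ha hb => Finset.mem_compl.mp (hT hb) ha)))
      (fun H hH => rfl)]
    have h2 : ((∑ t ∈ Jᶜ.powerset, (-1 : ℤ) ^ t.card : ℤ) : ℝ)
        = ∑ t ∈ Jᶜ.powerset, (-1 : ℝ) ^ t.card := by push_cast; rfl
    rw [← h2, Finset.sum_powerset_neg_one_pow_card]
    by_cases hJ : J = Finset.univ
    · simp [hJ]
    · have hne : Jᶜ ≠ ∅ := by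
        simp only [ne_eq, Finset.compl_eq_empty_iff]
        exact hJ
      simp [hne, hJ]
  rw [Finset.sum_congr rfl main]
  simp only [ite_smul, one_smul, zero_smul]
  rw [Finset.sum_ite_eq' (Finset.univ : Finset ι).powerset Finset.univ
    (fun J => piAvg J w x)]
  simp [piAvg_univ w x]
end Aux

lemma inner_Qop {ι : Type*} [Fintype ι] [DecidableEq ι] {Z : ι → Type*}
    [∀ i, Fintype (Z i)] [∀ i, DecidableEq (Z i)] [∀ i, Nonempty (Z i)]
    {V : Type*} [NormedAddCommGroup V] [InnerProductSpace ℝ V]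
    (H : Finset ι) (u : (∀ i, Z i) → V) (c : V) (x : ∀ i, Z i) :
    ⟪Qop H u x, c⟫ = Qop H (fun z => ⟪u z, c⟫) x := by
  simp only [Qop_apply, piAvg, sum_inner, real_inner_smul_left, smul_eq_mul,
    Finset.mul_sum]

/-- "relative causal independence"
`P(y|x) = f(y, x_I, x_K) · g(y, x_J, x_K) · h(x)` for all `x ∈ X` and `y ∈ Y₀` is
equivalent to `⟨u_H(x), v(y) − v(y')⟩ = 0` for all `x`, all `y, y' ∈ Y₀`, and all `H`
meeting both `I` and `J`. -/
theorem relCausalIndep_iff_orthogonal {m : ℕ}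
    (X : Fin m → Type*) [∀ i, Fintype (X i)] [∀ i, Nonempty (X i)] [∀ i, DecidableEq (X i)]
    (Y : Type*) [Fintype Y] [Nonempty Y]
    (V : Type*) [NormedAddCommGroup V] [InnerProductSpace ℝ V] [FiniteDimensional ℝ V]
    (u : (∀ i, X i) → V) (v : Y → V)
    (P : (∀ i, X i) → Y → ℝ)
    (hP : ∀ x y, P x y = Real.exp ⟪u x, v y⟫ / ∑ y' : Y, Real.exp ⟪u x, v y'⟫)
    (I J K : Finset (Fin m))
    (hIJ : Disjoint I J) (hIK : Disjoint I K) (hJK : Disjoint J K)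
    (hIJK : I ∪ J ∪ K = Finset.univ)
    (Y₀ : Set Y) (hY₀ : Y₀.Nonempty) :
    (∃ (f g : Y → (∀ i, X i) → ℝ) (h : (∀ i, X i) → ℝ),
      (∀ (y : Y) (x x' : ∀ i, X i), (∀ i ∈ I ∪ K, x i = x' i) → f y x = f y x') ∧
      (∀ (y : Y) (x x' : ∀ i, X i), (∀ i ∈ J ∪ K, x i = x' i) → g y x = g y x') ∧
      (∀ (x : ∀ i, X i), ∀ y ∈ Y₀, P x y = f y x * g y x * h x)) ↔
    (∀ (x : ∀ i, X i), ∀ y ∈ Y₀, ∀ y' ∈ Y₀, ∀ H : Finset (Fin m),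
      (H ∩ I).Nonempty → (H ∩ J).Nonempty → ⟪Qop H u x, v y - v y'⟫ = 0) := by
  have hZ : ∀ z : ∀ i, X i, (0:ℝ) < ∑ y'' : Y, Real.exp ⟪u z, v y''⟫ :=
    fun z => Finset.sum_pos (fun _ _ => Real.exp_pos _) Finset.univ_nonempty
  constructor
  · rintro ⟨f, g, h, hf, hg, hfgh⟩ x y hy y' hy' H hHI hHJ
    have hPpos : ∀ z, ∀ yy, 0 < P z yy := by
      intro z yy
      rw [hP]
      exact div_pos (Real.exp_pos _) (hZ z)
    have key : ∀ z : ∀ i, X i, ⟪u z, v y - v y'⟫ =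
        ((Real.log (f y z) - Real.log (f y' z)) +
          (Real.log (g y z) - Real.log (g y' z))) := by
      intro z
      have e1 : ∀ yy, Real.log (P z yy)
          = ⟪u z, v yy⟫ - Real.log (∑ y'' : Y, Real.exp ⟪u z, v y''⟫) := by
        intro yy
        rw [hP, Real.log_div (Real.exp_ne_zero _) (ne_of_gt (hZ z)), Real.log_exp]
      have hne : ∀ yy ∈ Y₀, f yy z ≠ 0 ∧ g yy z ≠ 0 ∧ h z ≠ 0 := by
        intro yy hyy
        have hpos := (hPpos z yy).ne'
        rw [hfgh z yy hyy] at hpos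
        refine ⟨?_, ?_, ?_⟩ <;> intro h0 <;> simp [h0] at hpos
      have e2 : ∀ yy ∈ Y₀, Real.log (P z yy)
          = Real.log (f yy z) + Real.log (g yy z) + Real.log (h z) := by
        intro yy hyy
        obtain ⟨h1, h2, h3⟩ := hne yy hyy
        rw [hfgh z yy hyy, Real.log_mul (mul_ne_zero h1 h2) h3, Real.log_mul h1 h2]
      have dy := (e1 y).symm.trans (e2 y hy)
      have dy' := (e1 y').symm.trans (e2 y' hy')
      rw [inner_sub_right]
      linarith
    rw [inner_Qop, funext key, Qop_add_apply]
    obtain ⟨j, hj⟩ := hHJ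
    obtain ⟨i, hi⟩ := hHI
    have hjH : j ∈ H := (Finset.mem_inter.mp hj).1
    have hjJ : j ∈ J := (Finset.mem_inter.mp hj).2
    have hiH : i ∈ H := (Finset.mem_inter.mp hi).1
    have hiI : i ∈ I := (Finset.mem_inter.mp hi).2
    have hjIK : j ∉ I ∪ K := by
      rw [Finset.mem_union]
      rintro (hc | hc)
      · exact Finset.disjoint_right.mp hIJ hjJ hc
      · exact Finset.disjoint_left.mp hJK hjJ hc
    have hiJK : i ∉ J ∪ K := by
      rw [Finset.mem_union]
      rintro (hc | hc)
      · exact Finset.disjoint_left.mp hIJ hiI hc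
      · exact Finset.disjoint_left.mp hIK hiI hc
    have hF : ∀ z z' : ∀ i, X i, (∀ k ∈ I ∪ K, z k = z' k) →
        (Real.log (f y z) - Real.log (f y' z))
          = (Real.log (f y z') - Real.log (f y' z')) := by
      intro z z' hzz
      rw [hf y z z' hzz, hf y' z z' hzz]
    have hG : ∀ z z' : ∀ i, X i, (∀ k ∈ J ∪ K, z k = z' k) →
        (Real.log (g y z) - Real.log (g y' z))
          = (Real.log (g y z') - Real.log (g y' z')) := by
      intro z z' hzz
      rw [hg y z z' hzz, hg y' z z' hzz]
    rw [Qop_eq_zero hF hjH hjIK x, Qop_eq_zero hG hiH hiJK x, add_zero]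
  · intro horth
    obtain ⟨y₀, hy₀⟩ := hY₀
    refine ⟨fun y x => Real.exp (∑ H ∈ (Finset.univ : Finset (Fin m)).powerset.filter
        (fun H => H ∩ J = ∅), ⟪Qop H u x, v y - v y₀⟫),
      fun y x => Real.exp (∑ H ∈ (Finset.univ : Finset (Fin m)).powerset.filter
        (fun H => ¬H ∩ J = ∅ ∧ H ∩ I = ∅), ⟪Qop H u x, v y - v y₀⟫),
      fun x => P x y₀, ?_, ?_, ?_⟩
    · intro y x x' hxx
      dsimp only
      congr 1
      refine Finset.sum_congr rfl fun H hH => ?_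
      simp only [Finset.mem_filter, Finset.mem_powerset] at hH
      have hsub : H ⊆ I ∪ K := by
        intro k hk
        have hku : k ∈ I ∪ J ∪ K := by rw [hIJK]; exact Finset.mem_univ k
        have hkJ : k ∉ J := by
          intro hkJ
          have : k ∈ H ∩ J := Finset.mem_inter.mpr ⟨hk, hkJ⟩
          rw [hH.2] at this
          exact absurd this (Finset.notMem_empty k)
        simp only [Finset.mem_union] at hku ⊢
        tauto
      rw [Qop_congr H u (fun k hk => hxx k (hsub hk))]
    · intro y x x' hxx
      dsimp only
      congr 1
      refine Finset.sum_congr rfl fun H hH => ?_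
      simp only [Finset.mem_filter, Finset.mem_powerset] at hH
      have hsub : H ⊆ J ∪ K := by
        intro k hk
        have hku : k ∈ I ∪ J ∪ K := by rw [hIJK]; exact Finset.mem_univ k
        have hkI : k ∉ I := by
          intro hkI
          have : k ∈ H ∩ I := Finset.mem_inter.mpr ⟨hk, hkI⟩
          rw [hH.2.2] at this
          exact absurd this (Finset.notMem_empty k)
        simp only [Finset.mem_union] at hku ⊢
        tauto
      rw [Qop_congr H u (fun k hk => hxx k (hsub hk))]
    · intro x y hy
      dsimp only
      have htot : ∑ H ∈ (Finset.univ : Finset (Fin m)).powerset,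
          ⟪Qop H u x, v y - v y₀⟫ = ⟪u x, v y - v y₀⟫ := by
        rw [← sum_inner, sum_Qop u x]
      have hsplit1 := Finset.sum_filter_add_sum_filter_not
        (Finset.univ : Finset (Fin m)).powerset (fun H => H ∩ J = ∅)
        (fun H => ⟪Qop H u x, v y - v y₀⟫)
      have hsplit2 := Finset.sum_filter_add_sum_filter_not
        ((Finset.univ : Finset (Fin m)).powerset.filter (fun H => ¬H ∩ J = ∅))
        (fun H => H ∩ I = ∅) (fun H => ⟪Qop H u x, v y - v y₀⟫)
      rw [Finset.filter_filter, Finset.filter_filter] at hsplit2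
      have hzero : ∑ H ∈ (Finset.univ : Finset (Fin m)).powerset.filter
          (fun H => ¬H ∩ J = ∅ ∧ ¬H ∩ I = ∅), ⟪Qop H u x, v y - v y₀⟫ = 0 := by
        refine Finset.sum_eq_zero fun H hH => ?_
        simp only [Finset.mem_filter] at hH
        exact horth x y hy y₀ hy₀ H
          (Finset.nonempty_iff_ne_empty.mpr hH.2.2)
          (Finset.nonempty_iff_ne_empty.mpr hH.2.1)
      have hsum : (∑ H ∈ (Finset.univ : Finset (Fin m)).powerset.filter
            (fun H => H ∩ J = ∅), ⟪Qop H u x, v y - v y₀⟫)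
          + (∑ H ∈ (Finset.univ : Finset (Fin m)).powerset.filter
            (fun H => ¬H ∩ J = ∅ ∧ H ∩ I = ∅), ⟪Qop H u x, v y - v y₀⟫)
          = ⟪u x, v y - v y₀⟫ := by
        rw [← htot, ← hsplit1, ← hsplit2, hzero]
        ring
      rw [← Real.exp_add, hsum, hP x y, hP x y₀, inner_sub_right, Real.exp_sub]
      field_simp
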